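/- Let (H,R) be a quasi-triangular bialgebra with R = Σ sᵢ⊗tᵢ ∈ H⊗H, let V be a left H-module, and let α : V → V be an H-module morphism. Then B = τ∘R : V⊗V → V⊗V, given by B(v⊗w) = Σ tᵢ·w ⊗ sᵢ·v, commutes with α⊗α and satisfies the Hom-Yang-Baxter equation (α⊗B)∘(B⊗α)∘(α⊗B) = (B⊗α)∘(α⊗B)∘(B⊗α). -/

import Mathlib

open TensorProduct

section QT

variable {k H V : Type*} [Field k] [Ring H] [Bialgebra k H]
  [AddCommGroup V] [Module k V] [Module H V]
  [IsScalarTower k H V] [SMulCommClass k H V]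

/-- The `H`-action on `V` as a `k`-bilinear map. -/
noncomputable def actHom (k H V : Type*) [CommRing k] [Ring H] [Algebra k H]
    [AddCommGroup V] [Module k V] [Module H V]
    [IsScalarTower k H V] [SMulCommClass k H V] : H →ₗ[k] V →ₗ[k] V :=
  LinearMap.mk₂ k (fun x v => x • v)
    (fun x y v => add_smul x y v)
    (fun c x v => smul_assoc c x v)
    (fun x v w => smul_add x v w)
    (fun c x v => smul_comm x c v)

/-- `x ⊗ y ↦ x ⊗ (y ⊗ 1)`, giving `R₁₂` inside `H ⊗ (H ⊗ H)`. -/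
noncomputable def iota12 (k H : Type*) [CommRing k] [Ring H] [Algebra k H] :
    H ⊗[k] H →ₗ[k] H ⊗[k] (H ⊗[k] H) :=
  TensorProduct.map LinearMap.id ((TensorProduct.mk k H H).flip 1)

/-- `x ⊗ y ↦ x ⊗ (1 ⊗ y)`, giving `R₁₃` inside `H ⊗ (H ⊗ H)`. -/
noncomputable def iota13 (k H : Type*) [CommRing k] [Ring H] [Algebra k H] :
    H ⊗[k] H →ₗ[k] H ⊗[k] (H ⊗[k] H) :=
  TensorProduct.map LinearMap.id (TensorProduct.mk k H H 1)

/-- The operator `B = τ ∘ R` on `V ⊗ V`: `v ⊗ w ↦ Σ tᵢ • w ⊗ sᵢ • v`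
for `R = Σ sᵢ ⊗ tᵢ`. -/
noncomputable def qtB (k H V : Type*) [CommRing k] [Ring H] [Algebra k H]
    [AddCommGroup V] [Module k V] [Module H V]
    [IsScalarTower k H V] [SMulCommClass k H V] (R : H ⊗[k] H) :
    V ⊗[k] V →ₗ[k] V ⊗[k] V :=
  (TensorProduct.comm k V V).toLinearMap ∘ₗ
    TensorProduct.homTensorHomMap (RingHom.id k) V V V V
      ((TensorProduct.map (actHom k H V) (actHom k H V)) R)

/-- The operator `α ⊗ B` on `(V ⊗ V) ⊗ V` obtained via the associator. -/
noncomputable def leftTwist {k V : Type*} [CommRing k] [AddCommGroup V] [Module k V]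
    (α : V →ₗ[k] V) (B : V ⊗[k] V →ₗ[k] V ⊗[k] V) :
    (V ⊗[k] V) ⊗[k] V →ₗ[k] (V ⊗[k] V) ⊗[k] V :=
  (TensorProduct.assoc k V V V).symm.toLinearMap ∘ₗ
    TensorProduct.map α B ∘ₗ (TensorProduct.assoc k V V V).toLinearMap

section Aux
variable (k H V : Type*) [CommRing k] [Ring H] [Algebra k H]
  [AddCommGroup V] [Module k V] [Module H V]
  [IsScalarTower k H V] [SMulCommClass k H V]

@[simp] lemma actHom_apply (x : H) (v : V) : actHom k H V x v = x • v := rfl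

lemma actHom_one : actHom k H V 1 = LinearMap.id := by
  apply LinearMap.ext; intro v; simp

lemma actHom_mul (x y : H) :
    actHom k H V (x * y) = actHom k H V x ∘ₗ actHom k H V y := by
  apply LinearMap.ext; intro v; simp [mul_smul]

/-- `H ⊗ H` acting on `V ⊗ V`, as an algebra hom. -/
noncomputable def Phi2 : H ⊗[k] H →ₐ[k] Module.End k (V ⊗[k] V) :=
  AlgHom.ofLinearMap
    (homTensorHomMap (RingHom.id k) V V V V ∘ₗ TensorProduct.map (actHom k H V) (actHom k H V))
    (by
      simp only [Algebra.TensorProduct.one_def, LinearMap.comp_apply, map_tmul,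
        homTensorHomMap_apply, actHom_one, Module.End.one_eq_id, map_id])
    (by
      intro S T
      induction S using TensorProduct.induction_on with
      | zero => simp
      | add a b ha hb => simp only [add_mul, map_add, ha, hb]
      | tmul a b =>
        induction T using TensorProduct.induction_on with
        | zero => simp
        | add c d hc hd => simp only [mul_add, map_add, hc, hd]
        | tmul c d =>
          simp only [Algebra.TensorProduct.tmul_mul_tmul, LinearMap.comp_apply,
            map_tmul, homTensorHomMap_apply, actHom_mul, Module.End.mul_eq_comp,
            TensorProduct.map_comp])

@[simp] lemma Phi2_tmul (x y : H) :
    Phi2 k H V (x ⊗ₜ[k] y)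
      = TensorProduct.map (actHom k H V x) (actHom k H V y) := by
  simp [Phi2, AlgHom.ofLinearMap]

/-- `H ⊗ (H ⊗ H)` acting on `V ⊗ (V ⊗ V)`, as an algebra hom. -/
noncomputable def Phi3 : H ⊗[k] (H ⊗[k] H) →ₐ[k] Module.End k (V ⊗[k] (V ⊗[k] V)) :=
  AlgHom.ofLinearMap
    (homTensorHomMap (RingHom.id k) V (V ⊗[k] V) V (V ⊗[k] V) ∘ₗ
      TensorProduct.map (actHom k H V) (Phi2 k H V).toLinearMap)
    (by
      simp only [Algebra.TensorProduct.one_def, LinearMap.comp_apply, map_tmul,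
        homTensorHomMap_apply, actHom_one, AlgHom.toLinearMap_apply]
      rw [← Algebra.TensorProduct.one_def, map_one]
      simp [Module.End.one_eq_id])
    (by
      intro S T
      induction S using TensorProduct.induction_on with
      | zero => simp
      | add a b ha hb => simp only [add_mul, map_add, ha, hb]
      | tmul a b =>
        induction T using TensorProduct.induction_on with
        | zero => simp
        | add c d hc hd => simp only [mul_add, map_add, hc, hd]
        | tmul c d =>
          simp only [Algebra.TensorProduct.tmul_mul_tmul, LinearMap.comp_apply,
            map_tmul, homTensorHomMap_apply, actHom_mul, AlgHom.toLinearMap_apply,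
            map_mul, Module.End.mul_eq_comp, TensorProduct.map_comp])

@[simp] lemma Phi3_tmul (x : H) (S : H ⊗[k] H) :
    Phi3 k H V (x ⊗ₜ[k] S)
      = TensorProduct.map (actHom k H V x) (Phi2 k H V S) := by
  simp [Phi3, AlgHom.ofLinearMap]

end Aux

section More
variable (k H V : Type*) [CommRing k] [Ring H] [Algebra k H]
  [AddCommGroup V] [Module k V] [Module H V]
  [IsScalarTower k H V] [SMulCommClass k H V]

/-- Flip of first two factors of `V ⊗ (V ⊗ V)`. -/
noncomputable def T12 : V ⊗[k] (V ⊗[k] V) →ₗ[k] V ⊗[k] (V ⊗[k] V) :=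
  (TensorProduct.assoc k V V V).toLinearMap ∘ₗ
    TensorProduct.map (TensorProduct.comm k V V).toLinearMap LinearMap.id ∘ₗ
      (TensorProduct.assoc k V V V).symm.toLinearMap

/-- Flip of last two factors of `V ⊗ (V ⊗ V)`. -/
noncomputable def T23 : V ⊗[k] (V ⊗[k] V) →ₗ[k] V ⊗[k] (V ⊗[k] V) :=
  TensorProduct.map LinearMap.id (TensorProduct.comm k V V).toLinearMap

@[simp] lemma T12_tmul (u v w : V) :
    T12 k V (u ⊗ₜ (v ⊗ₜ w)) = v ⊗ₜ (u ⊗ₜ w) := by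
  simp [T12]

@[simp] lemma T23_tmul (u v w : V) :
    T23 k V (u ⊗ₜ (v ⊗ₜ w)) = u ⊗ₜ (w ⊗ₜ v) := by
  simp [T23]

variable {V} in
/-- `α` acting in one of the three slots of `V ⊗ (V ⊗ V)`. -/
noncomputable def Aop (i : Fin 3) (α : V →ₗ[k] V) :
    V ⊗[k] (V ⊗[k] V) →ₗ[k] V ⊗[k] (V ⊗[k] V) :=
  match i with
  | 0 => TensorProduct.map α LinearMap.id
  | 1 => TensorProduct.map LinearMap.id (TensorProduct.map α LinearMap.id)
  | 2 => TensorProduct.map LinearMap.id (TensorProduct.map LinearMap.id α)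

@[simp] lemma Aop0_tmul (α : V →ₗ[k] V) (u v w : V) :
    Aop k 0 α (u ⊗ₜ (v ⊗ₜ w)) = α u ⊗ₜ (v ⊗ₜ w) := rfl
@[simp] lemma Aop1_tmul (α : V →ₗ[k] V) (u v w : V) :
    Aop k 1 α (u ⊗ₜ (v ⊗ₜ w)) = u ⊗ₜ (α v ⊗ₜ w) := rfl
@[simp] lemma Aop2_tmul (α : V →ₗ[k] V) (u v w : V) :
    Aop k 2 α (u ⊗ₜ (v ⊗ₜ w)) = u ⊗ₜ (v ⊗ₜ α w) := rfl

/-- Swap of the first two tensor factors of `H ⊗ (H ⊗ H)`, as an algebra automorphism. -/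
noncomputable def sigma12 : H ⊗[k] (H ⊗[k] H) ≃ₐ[k] H ⊗[k] (H ⊗[k] H) :=
  ((Algebra.TensorProduct.assoc k k k H H H).symm.trans
    (Algebra.TensorProduct.congr (Algebra.TensorProduct.comm k H H) AlgEquiv.refl)).trans
      (Algebra.TensorProduct.assoc k k k H H H)

/-- Swap of the last two tensor factors of `H ⊗ (H ⊗ H)`, as an algebra automorphism. -/
noncomputable def sigma23 : H ⊗[k] (H ⊗[k] H) ≃ₐ[k] H ⊗[k] (H ⊗[k] H) :=
  Algebra.TensorProduct.congr AlgEquiv.refl (Algebra.TensorProduct.comm k H H)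

@[simp] lemma sigma12_tmul (x y z : H) :
    sigma12 k H (x ⊗ₜ (y ⊗ₜ z)) = y ⊗ₜ (x ⊗ₜ z) := by
  simp [sigma12]

@[simp] lemma sigma23_tmul (x y z : H) :
    sigma23 k H (x ⊗ₜ (y ⊗ₜ z)) = x ⊗ₜ (z ⊗ₜ y) := by
  simp [sigma23]

end More

section Rel
variable {k H V : Type*} [CommRing k] [Ring H] [Algebra k H]
  [AddCommGroup V] [Module k V] [Module H V]
  [IsScalarTower k H V] [SMulCommClass k H V]

lemma ext3 {W : Type*} [AddCommGroup W] [Module k W]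
    {f g : V ⊗[k] (V ⊗[k] V) →ₗ[k] W}
    (h : ∀ u v w : V, f (u ⊗ₜ (v ⊗ₜ w)) = g (u ⊗ₜ (v ⊗ₜ w))) : f = g := by
  apply TensorProduct.ext'
  intro u y
  induction y using TensorProduct.induction_on with
  | zero => simp [tmul_zero]
  | add a b ha hb => simp [tmul_add, ha, hb]
  | tmul v w => exact h u v w

lemma T12_phi3 (S : H ⊗[k] (H ⊗[k] H)) :
    T12 k V ∘ₗ (Phi3 k H V S : _) = (Phi3 k H V (sigma12 k H S) : _) ∘ₗ T12 k V := by
  induction S using TensorProduct.induction_on with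
  | zero => simp [LinearMap.comp_zero, LinearMap.zero_comp]
  | add a b ha hb => simp only [map_add, LinearMap.add_comp, LinearMap.comp_add, ha, hb]
  | tmul x S' =>
    induction S' using TensorProduct.induction_on with
    | zero => simp [tmul_zero, LinearMap.comp_zero, LinearMap.zero_comp]
    | add a b ha hb =>
      simp only [tmul_add, map_add, LinearMap.add_comp, LinearMap.comp_add, ha, hb]
    | tmul y z =>
      apply ext3
      intro u v w
      simp [mul_smul]

lemma T23_phi3 (S : H ⊗[k] (H ⊗[k] H)) :
    T23 k V ∘ₗ (Phi3 k H V S : _) = (Phi3 k H V (sigma23 k H S) : _) ∘ₗ T23 k V := by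
  induction S using TensorProduct.induction_on with
  | zero => simp [LinearMap.comp_zero, LinearMap.zero_comp]
  | add a b ha hb => simp only [map_add, LinearMap.add_comp, LinearMap.comp_add, ha, hb]
  | tmul x S' =>
    induction S' using TensorProduct.induction_on with
    | zero => simp [tmul_zero, LinearMap.comp_zero, LinearMap.zero_comp]
    | add a b ha hb =>
      simp only [tmul_add, map_add, LinearMap.add_comp, LinearMap.comp_add, ha, hb]
    | tmul y z =>
      apply ext3
      intro u v w
      simp [mul_smul]

lemma map_phi2 (f g : V →ₗ[k] V)
    (hf : ∀ (x : H) (v : V), f (x • v) = x • f v)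
    (hg : ∀ (x : H) (v : V), g (x • v) = x • g v) (S : H ⊗[k] H) :
    TensorProduct.map f g ∘ₗ (Phi2 k H V S : _) = (Phi2 k H V S : _) ∘ₗ TensorProduct.map f g := by
  induction S using TensorProduct.induction_on with
  | zero => simp [LinearMap.comp_zero, LinearMap.zero_comp]
  | add a b ha hb => simp only [map_add, LinearMap.add_comp, LinearMap.comp_add, ha, hb]
  | tmul x y =>
    apply TensorProduct.ext'
    intro u v
    simp [hf, hg]

lemma map_phi3 (f g h : V →ₗ[k] V)
    (hf : ∀ (x : H) (v : V), f (x • v) = x • f v)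
    (hg : ∀ (x : H) (v : V), g (x • v) = x • g v)
    (hh : ∀ (x : H) (v : V), h (x • v) = x • h v) (S : H ⊗[k] (H ⊗[k] H)) :
    TensorProduct.map f (TensorProduct.map g h) ∘ₗ (Phi3 k H V S : _)
      = (Phi3 k H V S : _) ∘ₗ TensorProduct.map f (TensorProduct.map g h) := by
  induction S using TensorProduct.induction_on with
  | zero => simp [LinearMap.comp_zero, LinearMap.zero_comp]
  | add a b ha hb => simp only [map_add, LinearMap.add_comp, LinearMap.comp_add, ha, hb]
  | tmul x S' =>
    rw [Phi3_tmul, ← TensorProduct.map_comp, ← TensorProduct.map_comp]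
    congr 1
    · apply LinearMap.ext; intro v; simp [hf]
    · exact map_phi2 g h hg hh S'

lemma T12_mapmap (f g h : V →ₗ[k] V) :
    T12 k V ∘ₗ TensorProduct.map f (TensorProduct.map g h)
      = TensorProduct.map g (TensorProduct.map f h) ∘ₗ T12 k V := by
  apply ext3; intro u v w; simp

lemma T23_mapmap (f g h : V →ₗ[k] V) :
    T23 k V ∘ₗ TensorProduct.map f (TensorProduct.map g h)
      = TensorProduct.map f (TensorProduct.map h g) ∘ₗ T23 k V := by
  apply ext3; intro u v w; simp

lemma T_braid :
    T23 k V ∘ₗ T12 k V ∘ₗ T23 k V = T12 k V ∘ₗ T23 k V ∘ₗ T12 k V := by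
  apply ext3; intro u v w; simp

end Rel

section QYBE
variable {k H : Type*} [CommRing k] [Ring H] [Algebra k H]

@[simp] lemma iota12_tmul (x y : H) :
    iota12 k H (x ⊗ₜ y) = x ⊗ₜ (y ⊗ₜ (1 : H)) := rfl

@[simp] lemma iota13_tmul (x y : H) :
    iota13 k H (x ⊗ₜ y) = x ⊗ₜ ((1 : H) ⊗ₜ y) := rfl

lemma sigma12_one_tmul (S : H ⊗[k] H) :
    sigma12 k H ((1 : H) ⊗ₜ S) = iota13 k H S := by
  induction S using TensorProduct.induction_on with
  | zero => simp [tmul_zero]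
  | add a b ha hb => simp_all [tmul_add]
  | tmul x y => simp

lemma sigma12_iota13 (S : H ⊗[k] H) :
    sigma12 k H (iota13 k H S) = (1 : H) ⊗ₜ S := by
  induction S using TensorProduct.induction_on with
  | zero => simp
  | add a b ha hb => simp_all [tmul_add]
  | tmul x y => simp

lemma sigma23_iota12 (S : H ⊗[k] H) :
    sigma23 k H (iota12 k H S) = iota13 k H S := by
  induction S using TensorProduct.induction_on with
  | zero => simp
  | add a b ha hb => simp_all [tmul_add]
  | tmul x y => simp

lemma sigma23_iota13 (S : H ⊗[k] H) :
    sigma23 k H (iota13 k H S) = iota12 k H S := by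
  induction S using TensorProduct.induction_on with
  | zero => simp
  | add a b ha hb => simp_all [tmul_add]
  | tmul x y => simp

lemma iota12_mul_assoc (A C : H ⊗[k] H) (t : H) :
    iota12 k H A * (TensorProduct.assoc k H H H) (C ⊗ₜ t)
      = (TensorProduct.assoc k H H H) ((A * C) ⊗ₜ t) := by
  induction A using TensorProduct.induction_on with
  | zero => simp
  | add a b ha hb => simp only [map_add, add_mul, ha, hb, add_tmul]
  | tmul a b =>
    induction C using TensorProduct.induction_on with
    | zero => simp
    | add c d hc hd => simp_all [mul_add, add_tmul]
    | tmul c d =>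
      simp [Algebra.TensorProduct.tmul_mul_tmul]

lemma assoc_mul_iota12 (A C : H ⊗[k] H) (t : H) :
    (TensorProduct.assoc k H H H) (C ⊗ₜ t) * iota12 k H A
      = (TensorProduct.assoc k H H H) ((C * A) ⊗ₜ t) := by
  induction A using TensorProduct.induction_on with
  | zero => simp
  | add a b ha hb => simp only [map_add, mul_add, ha, hb, add_tmul]
  | tmul a b =>
    induction C using TensorProduct.induction_on with
    | zero => simp
    | add c d hc hd => simp_all [add_mul, add_tmul]
    | tmul c d =>
      simp [Algebra.TensorProduct.tmul_mul_tmul]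

lemma sigma12_assoc_tmul (C : H ⊗[k] H) (t : H) :
    sigma12 k H ((TensorProduct.assoc k H H H) (C ⊗ₜ t))
      = (TensorProduct.assoc k H H H) (((TensorProduct.comm k H H) C) ⊗ₜ t) := by
  induction C using TensorProduct.induction_on with
  | zero =>
    rw [zero_tmul, LinearEquiv.map_zero, map_zero, LinearEquiv.map_zero, zero_tmul,
      LinearEquiv.map_zero]
  | add a b ha hb => simp only [map_add, add_tmul, ha, hb]
  | tmul x y => simp

end QYBE

section QYBE2
variable {k H : Type*} [CommRing k] [Ring H] [Bialgebra k H]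

lemma qybe (R : H ⊗[k] H)
    (hR1 : ∀ x : H,
      (TensorProduct.comm k H H) (Coalgebra.comul x) * R = R * Coalgebra.comul x)
    -- (Δ ⊗ id)(R) = R₁₃ R₂₃
    (hR2 : (TensorProduct.assoc k H H H)
        ((TensorProduct.map Coalgebra.comul LinearMap.id) R)
      = iota13 k H R * ((1 : H) ⊗ₜ[k] R)) :
    iota12 k H R * iota13 k H R * ((1 : H) ⊗ₜ[k] R)
      = ((1 : H) ⊗ₜ[k] R) * iota13 k H R * iota12 k H R := by
  have key : ∀ W : H ⊗[k] H,
      iota12 k H R * (TensorProduct.assoc k H H H)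
          ((TensorProduct.map Coalgebra.comul LinearMap.id) W)
        = sigma12 k H ((TensorProduct.assoc k H H H)
            ((TensorProduct.map Coalgebra.comul LinearMap.id) W)) * iota12 k H R := by
    intro W
    induction W using TensorProduct.induction_on with
    | zero => simp
    | add a b ha hb => simp only [map_add, mul_add, add_mul, ha, hb]
    | tmul x t =>
      have h1 : (TensorProduct.map Coalgebra.comul LinearMap.id) (x ⊗ₜ[k] t)
          = (Coalgebra.comul x : H ⊗[k] H) ⊗ₜ[k] t := rfl
      rw [h1, iota12_mul_assoc, ← hR1, ← assoc_mul_iota12, sigma12_assoc_tmul]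
  have h := key R
  rw [hR2] at h
  rw [mul_assoc, h, map_mul, sigma12_iota13, sigma12_one_tmul, mul_assoc]

end QYBE2

section Connect
variable {k H V : Type*} [CommRing k] [Ring H] [Algebra k H]
  [AddCommGroup V] [Module k V] [Module H V]
  [IsScalarTower k H V] [SMulCommClass k H V]

lemma qtB_eq (R : H ⊗[k] H) :
    qtB k H V R = (TensorProduct.comm k V V).toLinearMap ∘ₗ (Phi2 k H V R : _) := rfl

lemma qtB_apply (R : H ⊗[k] H) (z : V ⊗[k] V) :
    qtB k H V R z = TensorProduct.comm k V V (Phi2 k H V R z) := rfl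

lemma qtB_zero : qtB k H V (0 : H ⊗[k] H) = 0 := by
  simp [qtB_eq, LinearMap.zero_comp, LinearMap.comp_zero]

lemma qtB_add (S T : H ⊗[k] H) :
    qtB k H V (S + T) = qtB k H V S + qtB k H V T := by
  simp [qtB_eq, map_add, LinearMap.comp_add]

/-- `α ⊗ B` on `V ⊗ (V ⊗ V)` as `A1 ∘ T23 ∘ Φ₃(R₂₃)`. -/
lemma map_alpha_qtB (R : H ⊗[k] H) (α : V →ₗ[k] V) :
    TensorProduct.map α (qtB k H V R)
      = TensorProduct.map α (TensorProduct.map LinearMap.id LinearMap.id) ∘ₗ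
          T23 k V ∘ₗ (Phi3 k H V ((1 : H) ⊗ₜ[k] R) : _) := by
  apply ext3
  intro u v w
  simp [qtB_apply, actHom_one, T23]

/-- `B ⊗ α` on `(V ⊗ V) ⊗ V`, conjugated by the associator. -/
lemma map_qtB_alpha (R : H ⊗[k] H) (α : V →ₗ[k] V) :
    TensorProduct.map (qtB k H V R) α
      = (TensorProduct.assoc k V V V).symm.toLinearMap ∘ₗ
          (T12 k V ∘ₗ (Phi3 k H V (iota12 k H R) : _) ∘ₗ
            TensorProduct.map LinearMap.id (TensorProduct.map LinearMap.id α)) ∘ₗ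
          (TensorProduct.assoc k V V V).toLinearMap := by
  apply TensorProduct.ext_threefold
  intro u v w
  simp only [LinearMap.comp_apply, TensorProduct.map_tmul, LinearEquiv.coe_coe,
    TensorProduct.assoc_tmul, LinearMap.id_coe, id_eq]
  induction R using TensorProduct.induction_on with
  | zero => simp [qtB_zero, zero_tmul]
  | add a b ha hb =>
    simp only [qtB_add, LinearMap.add_apply, add_tmul, map_add, ha, hb]
  | tmul s t =>
    rw [iota12_tmul, Phi3_tmul]
    simp [qtB_apply, actHom_one]

end Connect

section Main
variable {k H V : Type*} [CommRing k] [Ring H] [Algebra k H]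
  [AddCommGroup V] [Module k V] [Module H V]
  [IsScalarTower k H V] [SMulCommClass k H V]

lemma main_braid (R : H ⊗[k] H) (α : V →ₗ[k] V)
    (hα : ∀ (x : H) (v : V), α (x • v) = x • α v)
    (hq : iota12 k H R * iota13 k H R * ((1 : H) ⊗ₜ[k] R)
        = ((1 : H) ⊗ₜ[k] R) * iota13 k H R * iota12 k H R)
    (z : V ⊗[k] (V ⊗[k] V)) :
    TensorProduct.map α (TensorProduct.map (LinearMap.id : V →ₗ[k] V) (LinearMap.id : V →ₗ[k] V))
      (T23 k V (Phi3 k H V ((1 : H) ⊗ₜ[k] R)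
        (T12 k V (Phi3 k H V (iota12 k H R)
          (TensorProduct.map (LinearMap.id : V →ₗ[k] V) (TensorProduct.map (LinearMap.id : V →ₗ[k] V) α)
            (TensorProduct.map α (TensorProduct.map (LinearMap.id : V →ₗ[k] V) (LinearMap.id : V →ₗ[k] V))
              (T23 k V (Phi3 k H V ((1 : H) ⊗ₜ[k] R) z))))))))
    = T12 k V (Phi3 k H V (iota12 k H R)
        (TensorProduct.map (LinearMap.id : V →ₗ[k] V) (TensorProduct.map (LinearMap.id : V →ₗ[k] V) α)
          (TensorProduct.map α (TensorProduct.map (LinearMap.id : V →ₗ[k] V) (LinearMap.id : V →ₗ[k] V))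
            (T23 k V (Phi3 k H V ((1 : H) ⊗ₜ[k] R)
              (T12 k V (Phi3 k H V (iota12 k H R)
                (TensorProduct.map LinearMap.id
                  (TensorProduct.map (LinearMap.id : V →ₗ[k] V) α) z)))))))) := by
  have hid : ∀ (x : H) (v : V), (LinearMap.id : V →ₗ[k] V) (x • v)
      = x • (LinearMap.id : V →ₗ[k] V) v := fun _ _ => rfl
  -- α moving past Phi3
  have hPA1 : ∀ (S : H ⊗[k] (H ⊗[k] H)) (y : V ⊗[k] (V ⊗[k] V)),
      Phi3 k H V S (TensorProduct.map α (TensorProduct.map (LinearMap.id : V →ₗ[k] V) (LinearMap.id : V →ₗ[k] V)) y)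
        = TensorProduct.map α (TensorProduct.map (LinearMap.id : V →ₗ[k] V) (LinearMap.id : V →ₗ[k] V))
            (Phi3 k H V S y) :=
    fun S y => (LinearMap.congr_fun (map_phi3 α LinearMap.id LinearMap.id hα hid hid S) y).symm
  have hPA3 : ∀ (S : H ⊗[k] (H ⊗[k] H)) (y : V ⊗[k] (V ⊗[k] V)),
      Phi3 k H V S (TensorProduct.map (LinearMap.id : V →ₗ[k] V) (TensorProduct.map (LinearMap.id : V →ₗ[k] V) α) y)
        = TensorProduct.map (LinearMap.id : V →ₗ[k] V) (TensorProduct.map (LinearMap.id : V →ₗ[k] V) α)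
            (Phi3 k H V S y) :=
    fun S y => (LinearMap.congr_fun (map_phi3 LinearMap.id LinearMap.id α hid hid hα S) y).symm
  have hPA2 : ∀ (S : H ⊗[k] (H ⊗[k] H)) (y : V ⊗[k] (V ⊗[k] V)),
      Phi3 k H V S (TensorProduct.map (LinearMap.id : V →ₗ[k] V) (TensorProduct.map α (LinearMap.id : V →ₗ[k] V)) y)
        = TensorProduct.map (LinearMap.id : V →ₗ[k] V) (TensorProduct.map α (LinearMap.id : V →ₗ[k] V))
            (Phi3 k H V S y) :=
    fun S y => (LinearMap.congr_fun (map_phi3 LinearMap.id α LinearMap.id hid hα hid S) y).symm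
  -- α moving past flips
  have hT12A1 : ∀ y, T12 k V
      (TensorProduct.map α (TensorProduct.map (LinearMap.id : V →ₗ[k] V) (LinearMap.id : V →ₗ[k] V)) y)
        = TensorProduct.map (LinearMap.id : V →ₗ[k] V) (TensorProduct.map α (LinearMap.id : V →ₗ[k] V)) (T12 k V y) :=
    LinearMap.congr_fun (T12_mapmap α LinearMap.id LinearMap.id)
  have hT12A2 : ∀ y, T12 k V
      (TensorProduct.map (LinearMap.id : V →ₗ[k] V) (TensorProduct.map α (LinearMap.id : V →ₗ[k] V)) y)
        = TensorProduct.map α (TensorProduct.map (LinearMap.id : V →ₗ[k] V) (LinearMap.id : V →ₗ[k] V)) (T12 k V y) :=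
    LinearMap.congr_fun (T12_mapmap LinearMap.id α LinearMap.id)
  have hT12A3 : ∀ y, T12 k V
      (TensorProduct.map (LinearMap.id : V →ₗ[k] V) (TensorProduct.map (LinearMap.id : V →ₗ[k] V) α) y)
        = TensorProduct.map (LinearMap.id : V →ₗ[k] V) (TensorProduct.map (LinearMap.id : V →ₗ[k] V) α) (T12 k V y) :=
    LinearMap.congr_fun (T12_mapmap LinearMap.id LinearMap.id α)
  have hT23A1 : ∀ y, T23 k V
      (TensorProduct.map α (TensorProduct.map (LinearMap.id : V →ₗ[k] V) (LinearMap.id : V →ₗ[k] V)) y)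
        = TensorProduct.map α (TensorProduct.map (LinearMap.id : V →ₗ[k] V) (LinearMap.id : V →ₗ[k] V)) (T23 k V y) :=
    LinearMap.congr_fun (T23_mapmap α LinearMap.id LinearMap.id)
  have hT23A2 : ∀ y, T23 k V
      (TensorProduct.map (LinearMap.id : V →ₗ[k] V) (TensorProduct.map α (LinearMap.id : V →ₗ[k] V)) y)
        = TensorProduct.map (LinearMap.id : V →ₗ[k] V) (TensorProduct.map (LinearMap.id : V →ₗ[k] V) α) (T23 k V y) :=
    LinearMap.congr_fun (T23_mapmap LinearMap.id α LinearMap.id)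
  have hT23A3 : ∀ y, T23 k V
      (TensorProduct.map (LinearMap.id : V →ₗ[k] V) (TensorProduct.map (LinearMap.id : V →ₗ[k] V) α) y)
        = TensorProduct.map (LinearMap.id : V →ₗ[k] V) (TensorProduct.map α (LinearMap.id : V →ₗ[k] V)) (T23 k V y) :=
    LinearMap.congr_fun (T23_mapmap LinearMap.id LinearMap.id α)
  -- commuting the αᵢ
  have hu21 : ∀ y, TensorProduct.map (LinearMap.id : V →ₗ[k] V) (TensorProduct.map α (LinearMap.id : V →ₗ[k] V))
      (TensorProduct.map α (TensorProduct.map (LinearMap.id : V →ₗ[k] V) (LinearMap.id : V →ₗ[k] V)) y)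
        = TensorProduct.map α (TensorProduct.map (LinearMap.id : V →ₗ[k] V) (LinearMap.id : V →ₗ[k] V))
            (TensorProduct.map (LinearMap.id : V →ₗ[k] V) (TensorProduct.map α (LinearMap.id : V →ₗ[k] V)) y) := by
    have h : TensorProduct.map (LinearMap.id : V →ₗ[k] V) (TensorProduct.map α (LinearMap.id : V →ₗ[k] V)) ∘ₗ
        TensorProduct.map α (TensorProduct.map (LinearMap.id : V →ₗ[k] V) (LinearMap.id : V →ₗ[k] V))
        = TensorProduct.map α (TensorProduct.map (LinearMap.id : V →ₗ[k] V) (LinearMap.id : V →ₗ[k] V)) ∘ₗ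
            TensorProduct.map (LinearMap.id : V →ₗ[k] V) (TensorProduct.map α (LinearMap.id : V →ₗ[k] V)) := by
      apply ext3; intro u v w; simp
    exact fun y => LinearMap.congr_fun h y
  have hu31 : ∀ y, TensorProduct.map (LinearMap.id : V →ₗ[k] V) (TensorProduct.map (LinearMap.id : V →ₗ[k] V) α)
      (TensorProduct.map α (TensorProduct.map (LinearMap.id : V →ₗ[k] V) (LinearMap.id : V →ₗ[k] V)) y)
        = TensorProduct.map α (TensorProduct.map (LinearMap.id : V →ₗ[k] V) (LinearMap.id : V →ₗ[k] V))
            (TensorProduct.map (LinearMap.id : V →ₗ[k] V) (TensorProduct.map (LinearMap.id : V →ₗ[k] V) α) y) := by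
    have h : TensorProduct.map (LinearMap.id : V →ₗ[k] V) (TensorProduct.map (LinearMap.id : V →ₗ[k] V) α) ∘ₗ
        TensorProduct.map α (TensorProduct.map (LinearMap.id : V →ₗ[k] V) (LinearMap.id : V →ₗ[k] V))
        = TensorProduct.map α (TensorProduct.map (LinearMap.id : V →ₗ[k] V) (LinearMap.id : V →ₗ[k] V)) ∘ₗ
            TensorProduct.map (LinearMap.id : V →ₗ[k] V) (TensorProduct.map (LinearMap.id : V →ₗ[k] V) α) := by
      apply ext3; intro u v w; simp
    exact fun y => LinearMap.congr_fun h y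
  have hu32 : ∀ y, TensorProduct.map (LinearMap.id : V →ₗ[k] V) (TensorProduct.map (LinearMap.id : V →ₗ[k] V) α)
      (TensorProduct.map (LinearMap.id : V →ₗ[k] V) (TensorProduct.map α (LinearMap.id : V →ₗ[k] V)) y)
        = TensorProduct.map (LinearMap.id : V →ₗ[k] V) (TensorProduct.map α (LinearMap.id : V →ₗ[k] V))
            (TensorProduct.map (LinearMap.id : V →ₗ[k] V) (TensorProduct.map (LinearMap.id : V →ₗ[k] V) α) y) := by
    have h : TensorProduct.map (LinearMap.id : V →ₗ[k] V) (TensorProduct.map (LinearMap.id : V →ₗ[k] V) α) ∘ₗ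
        TensorProduct.map (LinearMap.id : V →ₗ[k] V) (TensorProduct.map α (LinearMap.id : V →ₗ[k] V))
        = TensorProduct.map (LinearMap.id : V →ₗ[k] V) (TensorProduct.map α (LinearMap.id : V →ₗ[k] V)) ∘ₗ
            TensorProduct.map (LinearMap.id : V →ₗ[k] V) (TensorProduct.map (LinearMap.id : V →ₗ[k] V) α) := by
      apply ext3; intro u v w; simp
    exact fun y => LinearMap.congr_fun h y
  -- R-matrices moving past flips
  have rr1 : ∀ y, Phi3 k H V ((1 : H) ⊗ₜ[k] R) (T12 k V y)
      = T12 k V (Phi3 k H V (iota13 k H R) y) := by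
    intro y
    have h := LinearMap.congr_fun (T12_phi3 (V := V) (iota13 k H R)) y
    rw [sigma12_iota13] at h
    exact h.symm
  have rr4 : ∀ y, Phi3 k H V (iota13 k H R) (T12 k V y)
      = T12 k V (Phi3 k H V ((1 : H) ⊗ₜ[k] R) y) := by
    intro y
    have h := LinearMap.congr_fun (T12_phi3 (V := V) ((1 : H) ⊗ₜ[k] R)) y
    rw [sigma12_one_tmul] at h
    exact h.symm
  have rr2 : ∀ y, Phi3 k H V (iota12 k H R) (T23 k V y)
      = T23 k V (Phi3 k H V (iota13 k H R) y) := by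
    intro y
    have h := LinearMap.congr_fun (T23_phi3 (V := V) (iota13 k H R)) y
    rw [sigma23_iota13] at h
    exact h.symm
  have rr3 : ∀ y, Phi3 k H V (iota13 k H R) (T23 k V y)
      = T23 k V (Phi3 k H V (iota12 k H R) y) := by
    intro y
    have h := LinearMap.congr_fun (T23_phi3 (V := V) (iota12 k H R)) y
    rw [sigma23_iota12] at h
    exact h.symm
  -- braid for flips
  have tb : ∀ y, T23 k V (T12 k V (T23 k V y)) = T12 k V (T23 k V (T12 k V y)) :=
    fun y => LinearMap.congr_fun (T_braid (k := k) (V := V)) y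
  -- quantum Yang-Baxter
  have qq : ∀ y, Phi3 k H V (iota12 k H R) (Phi3 k H V (iota13 k H R)
      (Phi3 k H V ((1 : H) ⊗ₜ[k] R) y))
      = Phi3 k H V ((1 : H) ⊗ₜ[k] R) (Phi3 k H V (iota13 k H R)
          (Phi3 k H V (iota12 k H R) y)) := by
    intro y
    have h := congrArg (Phi3 k H V) hq
    rw [map_mul, map_mul, map_mul, map_mul] at h
    simpa [Module.End.mul_apply] using LinearMap.congr_fun h y
  simp only [hPA1, hPA2, hPA3, hT12A1, hT12A2, hT12A3, hT23A1, hT23A2, hT23A3,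
    hu21, hu31, hu32, rr1, rr2, rr3, rr4, tb, qq]

end Main


theorem stmt14 (R : H ⊗[k] H) (hRunit : IsUnit R)
    -- τ(Δ x) = R Δ(x) R⁻¹, in the equivalent form τ(Δ x) * R = R * Δ(x)
    (hR1 : ∀ x : H,
      (TensorProduct.comm k H H) (Coalgebra.comul x) * R = R * Coalgebra.comul x)
    -- (Δ ⊗ id)(R) = R₁₃ R₂₃
    (hR2 : (TensorProduct.assoc k H H H)
        ((TensorProduct.map Coalgebra.comul LinearMap.id) R)
      = iota13 k H R * ((1 : H) ⊗ₜ[k] R))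
    -- (id ⊗ Δ)(R) = R₁₃ R₁₂
    (hR3 : (TensorProduct.map LinearMap.id Coalgebra.comul) R
      = iota13 k H R * iota12 k H R)
    (α : V →ₗ[k] V) (hαmod : ∀ (x : H) (v : V), α (x • v) = x • α v) :
    (TensorProduct.map α α ∘ₗ qtB k H V R = qtB k H V R ∘ₗ TensorProduct.map α α) ∧
    (leftTwist α (qtB k H V R) ∘ₗ TensorProduct.map (qtB k H V R) α ∘ₗ
        leftTwist α (qtB k H V R)
      = TensorProduct.map (qtB k H V R) α ∘ₗ leftTwist α (qtB k H V R) ∘ₗ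
          TensorProduct.map (qtB k H V R) α) := by
  constructor
  · -- naturality with respect to α
    have hc : TensorProduct.map α α ∘ₗ (TensorProduct.comm k V V).toLinearMap
        = (TensorProduct.comm k V V).toLinearMap ∘ₗ TensorProduct.map α α := by
      apply TensorProduct.ext'; intro u v; simp
    have h2 := map_phi2 α α hαmod hαmod R
    apply LinearMap.ext; intro z
    simp only [LinearMap.comp_apply, qtB_apply]
    calc (TensorProduct.map α α) ((TensorProduct.comm k V V) ((Phi2 k H V R) z))
        = (TensorProduct.comm k V V) ((TensorProduct.map α α) ((Phi2 k H V R) z)) :=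
          LinearMap.congr_fun hc ((Phi2 k H V R) z)
      _ = (TensorProduct.comm k V V) ((Phi2 k H V R) ((TensorProduct.map α α) z)) :=
          congrArg _ (LinearMap.congr_fun h2 z)
  · -- the Hom-Yang-Baxter equation
    have hqybe := qybe R hR1 hR2
    have hX := map_alpha_qtB R α
    have hY := map_qtB_alpha R α
    rw [leftTwist, hX, hY]
    apply LinearMap.ext; intro z
    simp only [LinearMap.comp_apply, LinearEquiv.coe_coe, LinearEquiv.apply_symm_apply]
    exact congrArg (TensorProduct.assoc k V V V).symm
      (main_braid R α hαmod hqybe ((TensorProduct.assoc k V V V) z))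


end QT
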